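/- If g is a word in α, α⁻¹, β, β⁻¹ with a(g) = 0, then there exists a complete α-folding of g: a folding in which every occurrence of the letter α is paired (with some occurrence of α⁻¹) and only α-pairs occur. -/

import Mathlib

/-! Common setup: free group on two generators, Heisenberg group of unipotent
upper-triangular 3×3 integer matrices, the Heisenberg invariant. -/

noncomputable section

/-- The free group on two generators. -/
abbrev F : Type := FreeGroup Bool

/-- The generator `α` of the free group. -/
def Wα : F := FreeGroup.of false

/-- The generator `β` of the free group. -/
def Wβ : F := FreeGroup.of true

/-- `F₃`, the third term of the lower central series `F₁ = F`, `F_{n+1} = [F, Fₙ]`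
(Mathlib's `lowerCentralSeries` is 0-indexed). -/
abbrev F₃ : Subgroup F := (⊤ : Subgroup F).lowerCentralSeries 2

/-- `H = F/F₃`. -/
abbrev H : Type := F ⧸ F₃

/-- The unipotent upper-triangular matrix `M(a,b,c)`. -/
def Mmat (a b c : ℤ) : Matrix (Fin 3) (Fin 3) ℤ := !![1, a, c; 0, 1, b; 0, 0, 1]

theorem Mmat_mul (a b c a' b' c' : ℤ) :
    Mmat a b c * Mmat a' b' c' = Mmat (a + a') (b + b') (c + c' + a * b') := by
  simp [Mmat, Matrix.mul_fin_three]; ring_nf; simp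

theorem Mmat_zero : Mmat 0 0 0 = 1 := by
  simp [Mmat, Matrix.one_fin_three]

/-- `M(a,b,c)` as a unit of the matrix ring. -/
def Munit (a b c : ℤ) : (Matrix (Fin 3) (Fin 3) ℤ)ˣ :=
  ⟨Mmat a b c, Mmat (-a) (-b) (a * b - c),
    by rw [Mmat_mul]; rw [show a + -a = 0 by ring, show b + -b = 0 by ring,
      show c + (a*b - c) + a * (-b) = 0 by ring]; exact Mmat_zero,
    by rw [Mmat_mul]; rw [show -a + a = 0 by ring, show -b + b = 0 by ring,
      show (a*b - c) + c + (-a) * b = 0 by ring]; exact Mmat_zero⟩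

theorem Munit_mul (a b c a' b' c' : ℤ) :
    Munit a b c * Munit a' b' c' = Munit (a + a') (b + b') (c + c' + a * b') :=
  Units.ext (Mmat_mul a b c a' b' c')

theorem Munit_one : Munit 0 0 0 = 1 := Units.ext Mmat_zero

theorem Munit_inv (a b c : ℤ) : (Munit a b c)⁻¹ = Munit (-a) (-b) (a * b - c) :=
  Units.ext rfl

theorem Munit_congr {a b c a' b' c' : ℤ} (h1 : a = a') (h2 : b = b') (h3 : c = c') :
    Munit a b c = Munit a' b' c' := by subst h1; subst h2; subst h3; rfl

/-- The integer Heisenberg group, as the subgroup of units of the `3×3` integer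
matrix ring consisting of the unipotent upper-triangular matrices `M(a,b,c)`. -/
def Heis : Subgroup (Matrix (Fin 3) (Fin 3) ℤ)ˣ where
  carrier := {x | ∃ a b c : ℤ, x = Munit a b c}
  one_mem' := ⟨0, 0, 0, Munit_one.symm⟩
  mul_mem' := by
    rintro x y ⟨a, b, c, rfl⟩ ⟨a', b', c', rfl⟩
    exact ⟨_, _, _, Munit_mul a b c a' b' c'⟩
  inv_mem' := by
    rintro x ⟨a, b, c, rfl⟩
    exact ⟨_, _, _, Munit_inv a b c⟩

/-- The homomorphism `Ψ : F → ℍ` with `Ψ(α) = M(1,0,0)` and `Ψ(β) = M(0,1,0)`. -/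
def Ψ : F →* (Matrix (Fin 3) (Fin 3) ℤ)ˣ :=
  FreeGroup.lift fun x => if x then Munit 0 1 0 else Munit 1 0 0

theorem Ψ_mem (g : F) : Ψ g ∈ Heis := by
  induction g using FreeGroup.induction_on with
  | C1 => exact Heis.one_mem
  | of x => cases x <;> · show Ψ (FreeGroup.of _) ∈ Heis; rw [Ψ, FreeGroup.lift_apply_of]; exact ⟨_, _, _, rfl⟩
  | inv_of x hx => rw [map_inv]; exact Heis.inv_mem hx
  | mul x y hx hy => rw [map_mul]; exact Heis.mul_mem hx hy

open scoped commutatorElement in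
theorem Munit_commutator (a b c a' b' c' : ℤ) :
    ⁅Munit a b c, Munit a' b' c'⁆ = Munit 0 0 (a * b' - a' * b) := by
  rw [commutatorElement_def, Munit_inv, Munit_inv, Munit_mul, Munit_mul, Munit_mul]
  exact Munit_congr (by ring) (by ring) (by ring)

theorem Munit_central (z a b c : ℤ) : Munit 0 0 z * Munit a b c = Munit a b c * Munit 0 0 z := by
  rw [Munit_mul, Munit_mul]; exact Munit_congr (by ring) (by ring) (by ring)

theorem Heis_comm_central (g : F) (hg : g ∈ (⁅(⊤ : Subgroup F), ⊤⁆ : Subgroup F)) :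
    Ψ g ∈ Subgroup.centralizer (Heis : Set (Matrix (Fin 3) (Fin 3) ℤ)ˣ) := by
  have hle : (⁅(⊤ : Subgroup F), ⊤⁆ : Subgroup F) ≤
      Subgroup.comap Ψ (Subgroup.centralizer (Heis : Set (Matrix (Fin 3) (Fin 3) ℤ)ˣ)) := by
    rw [Subgroup.commutator_le]
    intro g₁ _ g₂ _
    rw [Subgroup.mem_comap, map_commutatorElement]
    obtain ⟨a, b, c, h1⟩ := Ψ_mem g₁
    obtain ⟨a', b', c', h2⟩ := Ψ_mem g₂
    rw [h1, h2, Munit_commutator]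
    rw [Subgroup.mem_centralizer_iff]
    rintro x ⟨p, q, r, rfl⟩
    exact (Munit_central _ _ _ _).symm
  exact hle hg

theorem F₃_le_ker : F₃ ≤ Ψ.ker := by
  show ⁅(⁅(⊤ : Subgroup F), ⊤⁆ : Subgroup F), ⊤⁆ ≤ Ψ.ker
  rw [Subgroup.commutator_le]
  intro g hg h _
  rw [MonoidHom.mem_ker, map_commutatorElement]
  have hc : Ψ h * Ψ g = Ψ g * Ψ h :=
    Subgroup.mem_centralizer_iff.mp (Heis_comm_central g hg) (Ψ h) (Ψ_mem h)
  rw [commutatorElement_def, ← hc]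
  group

/-- The induced homomorphism `ψ : H = F/F₃ → ℍ`. -/
def ψH : H →* Heis :=
  QuotientGroup.lift F₃ (Ψ.codRestrict Heis Ψ_mem)
    (fun g hg => by
      have : Ψ g = 1 := F₃_le_ker hg
      exact Subtype.ext (by simpa using this))

/-- The matrix of the image of `g ∈ H` in the Heisenberg group. -/
def mat (g : H) : Matrix (Fin 3) (Fin 3) ℤ := ((ψH g : (Matrix (Fin 3) (Fin 3) ℤ)ˣ) : Matrix (Fin 3) (Fin 3) ℤ)

/-- `a(g)`: the exponent sum of `α` in `g` (the `(0,1)` entry of the Heisenberg matrix). -/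
def aH (g : H) : ℤ := mat g 0 1

/-- `b(g)`: the exponent sum of `β` in `g` (the `(1,2)` entry of the Heisenberg matrix). -/
def bH (g : H) : ℤ := mat g 1 2

/-- The Heisenberg invariant `ν(g)` of `g ∈ H`: the exponent of the central element
`[α,β]` in the unique normal form `g = [α,β]^ν α^a β^b`. -/
def νH (g : H) : ℤ := mat g 0 2 - aH g * bH g

/-- `a(g)` for a word `g` in the free group. -/
def aF (g : F) : ℤ := aH (QuotientGroup.mk g)

/-- `b(g)` for a word `g` in the free group. -/
def bF (g : F) : ℤ := bH (QuotientGroup.mk g)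

/-- The Heisenberg invariant of a word in the free group: the Heisenberg invariant of its
image in `H = F/F₃`. -/
def νF (g : F) : ℤ := νH (QuotientGroup.mk g)

/-! Words in the letters α, α⁻¹, β, β⁻¹ and foldings (RNA secondary structures). -/

/-- A letter is a pair `(x, s)` (the `FreeGroup` convention): `s = true` for a generator,
`s = false` for its inverse. -/
abbrev Letter : Type := Bool × Bool

/-- A word in the letters `α`, `α⁻¹`, `β`, `β⁻¹`. -/
abbrev Word : Type := List Letter

/-- The letter `α`. -/
def lα : Letter := (false, true)
/-- The letter `α⁻¹`. -/
def lαinv : Letter := (false, false)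
/-- The letter `β`. -/
def lβ : Letter := (true, true)
/-- The letter `β⁻¹`. -/
def lβinv : Letter := (true, false)

/-- The exponent sum of `α` in a word: #`α` − #`α⁻¹`. -/
def aw (w : Word) : ℤ := (w.count lα : ℤ) - (w.count lαinv : ℤ)

/-- The exponent sum of `β` in a word: #`β` − #`β⁻¹`. -/
def bw (w : Word) : ℤ := (w.count lβ : ℤ) - (w.count lβinv : ℤ)

/-- The cyclic subword `w(i,j)` strictly between positions `i` and `j` (`0`-indexed),
read counterclockwise: if `i < j` it is `l_{i+1} ⋯ l_{j-1}`, and if `i > j` it is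
`l_{i+1} ⋯ l_n l_1 ⋯ l_{j-1}` (0-indexed: wraps around the end). -/
def between (w : Word) (i j : ℕ) : Word :=
  if i < j then (w.drop (i + 1)).take (j - i - 1) else w.drop (i + 1) ++ w.take j

/-- A folding (RNA secondary structure without pseudo-knots) of the cyclic word `w`:
a collection of disjoint pairs `(i,j)` of positions with `l_i ∈ {α, β}` and `l_j` the
inverse letter, subject to the non-nesting (no pseudo-knot) condition. -/
structure Folding (w : Word) where
  /-- The set of paired positions. -/
  pairs : Finset (Fin w.length × Fin w.length)
  ne : ∀ p ∈ pairs, p.1 ≠ p.2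
  matched : ∀ p ∈ pairs,
    (w.get p.1 = lα ∧ w.get p.2 = lαinv) ∨ (w.get p.1 = lβ ∧ w.get p.2 = lβinv)
  disjoint : ∀ p ∈ pairs, ∀ q ∈ pairs, p ≠ q →
    p.1 ≠ q.1 ∧ p.1 ≠ q.2 ∧ p.2 ≠ q.1 ∧ p.2 ≠ q.2
  nonnested : ∀ p ∈ pairs, ∀ q ∈ pairs,
    (p.1 < q.1 ∧ q.1 < p.2 → p.1 < q.2 ∧ q.2 < p.2) ∧
    (p.2 < q.1 ∧ q.1 < p.1 → p.2 < q.2 ∧ q.2 < p.1)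

/-- A complete `α`-folding: every pair is an `α`-pair and every occurrence of the
letter `α` is paired. -/
def Folding.IsCompleteAlpha {w : Word} (𝓕 : Folding w) : Prop :=
  (∀ p ∈ 𝓕.pairs, w.get p.1 = lα) ∧
    ∀ i : Fin w.length, w.get i = lα → ∃ p ∈ 𝓕.pairs, p.1 = i


/-- `y` lies strictly between `x` and `z` (in either order). -/
def BtwF {n : ℕ} (x y z : Fin n) : Prop := (x < y ∧ y < z) ∨ (z < y ∧ y < x)

theorem exists_matching {n : ℕ} (σ : Fin n → Prop) [DecidablePred σ]
    (s : Finset (Fin n))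
    (hc : (s.filter σ).card = (s.filter fun i => ¬ σ i).card) :
    ∃ M : Finset (Fin n × Fin n),
      (∀ p ∈ M, σ p.1 ∧ ¬ σ p.2 ∧ p.1 ∈ s ∧ p.2 ∈ s) ∧
      (∀ i ∈ s, ∃ p ∈ M, p.1 = i ∨ p.2 = i) ∧
      (∀ p ∈ M, ∀ q ∈ M, p ≠ q → p.1 ≠ q.1 ∧ p.1 ≠ q.2 ∧ p.2 ≠ q.1 ∧ p.2 ≠ q.2) ∧
      (∀ p ∈ M, ∀ q ∈ M, (BtwF p.1 q.1 p.2 ↔ BtwF p.1 q.2 p.2)) := by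
  induction s using Finset.strongInduction with
  | _ s IH =>
  rcases s.eq_empty_or_nonempty with rfl | hne
  · exact ⟨∅, by simp, by simp, by simp, by simp⟩
  have htrue : (s.filter σ).Nonempty := by
    rcases (s.filter σ).eq_empty_or_nonempty with h | h
    · exfalso
      have h2 : (s.filter fun i => ¬ σ i).card = 0 := by rw [← hc, h]; simp
      have h3 : s.filter (fun i => ¬ σ i) = ∅ := Finset.card_eq_zero.mp h2
      obtain ⟨x, hx⟩ := hne
      by_cases hσ : σ x
      · have : x ∈ s.filter σ := Finset.mem_filter.mpr ⟨hx, hσ⟩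
        rw [h] at this; exact absurd this (Finset.notMem_empty x)
      · have : x ∈ s.filter (fun i => ¬ σ i) := Finset.mem_filter.mpr ⟨hx, hσ⟩
        rw [h3] at this; exact absurd this (Finset.notMem_empty x)
    · exact h
  have hfalse : (s.filter fun i => ¬ σ i).Nonempty := by
    rw [← Finset.card_pos, ← hc, Finset.card_pos]; exact htrue
  obtain ⟨x, hx⟩ := htrue
  obtain ⟨y, hy⟩ := hfalse
  rw [Finset.mem_filter] at hx hy
  set t : Finset (Fin n × Fin n) :=
    (s ×ˢ s).filter (fun p => p.1 < p.2 ∧ (σ p.1 ↔ ¬ σ p.2)) with ht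
  have htne : t.Nonempty := by
    have hxy : x ≠ y := fun h => hy.2 (h ▸ hx.2)
    rcases lt_or_gt_of_ne hxy with h | h
    · exact ⟨(x, y), Finset.mem_filter.mpr ⟨Finset.mem_product.mpr ⟨hx.1, hy.1⟩,
        h, by tauto⟩⟩
    · exact ⟨(y, x), Finset.mem_filter.mpr ⟨Finset.mem_product.mpr ⟨hy.1, hx.1⟩,
        h, by tauto⟩⟩
  obtain ⟨p₀, hp₀, hmin⟩ := t.exists_min_image (fun p => p.2.val - p.1.val) htne
  rw [ht, Finset.mem_filter, Finset.mem_product] at hp₀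
  obtain ⟨⟨has, hbs⟩, hab, hσab⟩ := hp₀
  set a := p₀.1 with ha'
  set b := p₀.2 with hb'
  have hadj : ∀ c ∈ s, ¬ (a < c ∧ c < b) := by
    rintro c hcs ⟨h1, h2⟩
    have h1' : a.val < c.val := h1
    have h2' : c.val < b.val := h2
    by_cases hσc : σ c ↔ σ a
    · have hcb : (c, b) ∈ t := by
        rw [ht, Finset.mem_filter, Finset.mem_product]
        exact ⟨⟨hcs, hbs⟩, h2, by tauto⟩
      have := hmin _ hcb
      simp only at this
      omega
    · have hac : (a, c) ∈ t := by
        rw [ht, Finset.mem_filter, Finset.mem_product]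
        exact ⟨⟨has, hcs⟩, h1, by tauto⟩
      have := hmin _ hac
      simp only at this
      omega
  obtain ⟨u, v, hσu, hσv, hcases⟩ :
      ∃ u v : Fin n, σ u ∧ ¬ σ v ∧ ((u = a ∧ v = b) ∨ (u = b ∧ v = a)) := by
    by_cases h : σ a
    · exact ⟨a, b, h, fun hb => (hσab.mp h) hb, Or.inl ⟨rfl, rfl⟩⟩
    · refine ⟨b, a, ?_, h, Or.inr ⟨rfl, rfl⟩⟩
      by_contra hb
      exact h (hσab.mpr hb)
  have habne : a ≠ b := Fin.ne_of_lt hab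
  have hus : u ∈ s := by rcases hcases with ⟨rfl, rfl⟩ | ⟨rfl, rfl⟩ <;> assumption
  have hvs : v ∈ s := by rcases hcases with ⟨rfl, rfl⟩ | ⟨rfl, rfl⟩ <;> assumption
  have huvne : u ≠ v := fun h => hσv (h ▸ hσu)
  set s' : Finset (Fin n) := s \ {a, b} with hs'
  have hss : s' ⊂ s := by
    rw [hs']
    apply Finset.sdiff_ssubset
    · intro z hz
      rw [Finset.mem_insert, Finset.mem_singleton] at hz
      rcases hz with rfl | rfl <;> assumption
    · exact ⟨a, Finset.mem_insert_self _ _⟩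
  have hmem_s' : ∀ z, z ∈ s' ↔ z ∈ s ∧ z ≠ a ∧ z ≠ b := by
    intro z; rw [hs', Finset.mem_sdiff, Finset.mem_insert, Finset.mem_singleton]; tauto
  have hfilt : (s'.filter σ).card = (s'.filter fun i => ¬ σ i).card := by
    have hinsu : s.filter σ = insert u (s'.filter σ) := by
      ext z
      simp only [Finset.mem_filter, Finset.mem_insert, hmem_s']
      constructor
      · rintro ⟨hzs, hz⟩
        by_cases hzu : z = u
        · exact Or.inl hzu
        · refine Or.inr ⟨⟨hzs, ?_, ?_⟩, hz⟩ <;>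
          · rintro rfl
            rcases hcases with ⟨rfl, rfl⟩ | ⟨rfl, rfl⟩ <;> first
              | exact hzu rfl
              | exact hσv hz
      · rintro (rfl | ⟨⟨hzs, _, _⟩, hz⟩)
        · exact ⟨hus, hσu⟩
        · exact ⟨hzs, hz⟩
    have hinsv : s.filter (fun i => ¬ σ i) = insert v (s'.filter fun i => ¬ σ i) := by
      ext z
      simp only [Finset.mem_filter, Finset.mem_insert, hmem_s']
      constructor
      · rintro ⟨hzs, hz⟩
        by_cases hzv : z = v
        · exact Or.inl hzv
        · refine Or.inr ⟨⟨hzs, ?_, ?_⟩, hz⟩ <;>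
          · rintro rfl
            rcases hcases with ⟨rfl, rfl⟩ | ⟨rfl, rfl⟩ <;> first
              | exact hzv rfl
              | exact hz hσu
      · rintro (rfl | ⟨⟨hzs, _, _⟩, hz⟩)
        · exact ⟨hvs, hσv⟩
        · exact ⟨hzs, hz⟩
    have hunot : u ∉ s'.filter σ := by
      intro h
      rw [Finset.mem_filter, hmem_s'] at h
      rcases hcases with ⟨rfl, rfl⟩ | ⟨rfl, rfl⟩
      · exact h.1.2.1 rfl
      · exact h.1.2.2 rfl
    have hvnot : v ∉ s'.filter (fun i => ¬ σ i) := by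
      intro h
      rw [Finset.mem_filter, hmem_s'] at h
      rcases hcases with ⟨rfl, rfl⟩ | ⟨rfl, rfl⟩
      · exact h.1.2.2 rfl
      · exact h.1.2.1 rfl
    have := hc
    rw [hinsu, hinsv, Finset.card_insert_of_notMem hunot,
      Finset.card_insert_of_notMem hvnot] at this
    omega
  obtain ⟨M', hM1, hM2, hM3, hM4⟩ := IH s' hss hfilt
  have hends : ∀ r ∈ M', (r.1 ∈ s ∧ r.1 ≠ a ∧ r.1 ≠ b) ∧ (r.2 ∈ s ∧ r.2 ≠ a ∧ r.2 ≠ b) := by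
    intro r hr
    obtain ⟨_, _, h3, h4⟩ := hM1 r hr
    exact ⟨(hmem_s' _).mp h3, (hmem_s' _).mp h4⟩
  refine ⟨insert (u, v) M', ?_, ?_, ?_, ?_⟩
  · intro p hp
    rcases Finset.mem_insert.mp hp with rfl | hp
    · exact ⟨hσu, hσv, hus, hvs⟩
    · obtain ⟨h1, h2, h3, h4⟩ := hM1 p hp
      exact ⟨h1, h2, ((hmem_s' _).mp h3).1, ((hmem_s' _).mp h4).1⟩
  · intro i hi
    by_cases hia : i = a
    · subst hia
      rcases hcases with ⟨rfl, rfl⟩ | ⟨rfl, rfl⟩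
      · exact ⟨(a, b), Finset.mem_insert_self _ _, Or.inl rfl⟩
      · exact ⟨(b, a), Finset.mem_insert_self _ _, Or.inr rfl⟩
    · by_cases hib : i = b
      · subst hib
        rcases hcases with ⟨rfl, rfl⟩ | ⟨rfl, rfl⟩
        · exact ⟨(a, b), Finset.mem_insert_self _ _, Or.inr rfl⟩
        · exact ⟨(b, a), Finset.mem_insert_self _ _, Or.inl rfl⟩
      · have : i ∈ s' := (hmem_s' i).mpr ⟨hi, hia, hib⟩
        obtain ⟨p, hp, hpi⟩ := hM2 i this
        exact ⟨p, Finset.mem_insert_of_mem hp, hpi⟩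
  · intro p hp q hq hpq
    rcases Finset.mem_insert.mp hp with rfl | hp'
    · rcases Finset.mem_insert.mp hq with rfl | hq'
      · exact absurd rfl hpq
      · obtain ⟨⟨_, h1a, h1b⟩, ⟨_, h2a, h2b⟩⟩ := hends q hq'
        rcases hcases with ⟨rfl, rfl⟩ | ⟨rfl, rfl⟩
        · exact ⟨fun h => h1a (by simpa using h.symm), fun h => h2a (by simpa using h.symm),
            fun h => h1b (by simpa using h.symm), fun h => h2b (by simpa using h.symm)⟩
        · exact ⟨fun h => h1b (by simpa using h.symm), fun h => h2b (by simpa using h.symm),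
            fun h => h1a (by simpa using h.symm), fun h => h2a (by simpa using h.symm)⟩
    · rcases Finset.mem_insert.mp hq with rfl | hq'
      · obtain ⟨⟨_, h1a, h1b⟩, ⟨_, h2a, h2b⟩⟩ := hends p hp'
        rcases hcases with ⟨rfl, rfl⟩ | ⟨rfl, rfl⟩
        · exact ⟨fun h => h1a (by simpa using h), fun h => h1b (by simpa using h),
            fun h => h2a (by simpa using h), fun h => h2b (by simpa using h)⟩
        · exact ⟨fun h => h1b (by simpa using h), fun h => h1a (by simpa using h),
            fun h => h2b (by simpa using h), fun h => h2a (by simpa using h)⟩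
      · exact hM3 p hp' q hq' hpq
  · intro p hp q hq
    rcases Finset.mem_insert.mp hp with rfl | hp'
    · rcases Finset.mem_insert.mp hq with rfl | hq'
      · simp only [BtwF, Fin.lt_def]
        constructor <;> · rintro (⟨h1, h2⟩ | ⟨h1, h2⟩) <;> · exfalso; omega
      · obtain ⟨⟨hq1s, _, _⟩, ⟨hq2s, _, _⟩⟩ := hends q hq'
        have hna1 := hadj q.1 hq1s
        have hna2 := hadj q.2 hq2s
        have hab' : a.val < b.val := hab
        simp only [Fin.lt_def] at hna1 hna2
        have hna1' : ¬ (a.val < q.1.val ∧ q.1.val < b.val) := hna1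
        have hna2' : ¬ (a.val < q.2.val ∧ q.2.val < b.val) := hna2
        simp only [BtwF, Fin.lt_def]
        rcases hcases with ⟨rfl, rfl⟩ | ⟨rfl, rfl⟩ <;>
        · constructor <;> · rintro (⟨e1, e2⟩ | ⟨e1, e2⟩) <;> · exfalso; omega
    · rcases Finset.mem_insert.mp hq with rfl | hq'
      · obtain ⟨⟨hp1s, hp1a, hp1b⟩, ⟨hp2s, hp2a, hp2b⟩⟩ := hends p hp'
        have key : BtwF p.1 a p.2 ↔ BtwF p.1 b p.2 := by
          have hab' : a.val < b.val := hab
          have hp1a' : p.1.val ≠ a.val := fun h => hp1a (Fin.ext h)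
          have hp1b' : p.1.val ≠ b.val := fun h => hp1b (Fin.ext h)
          have hp2a' : p.2.val ≠ a.val := fun h => hp2a (Fin.ext h)
          have hp2b' : p.2.val ≠ b.val := fun h => hp2b (Fin.ext h)
          have hadj1 := hadj p.1 hp1s
          have hadj2 := hadj p.2 hp2s
          simp only [Fin.lt_def] at hadj1 hadj2
          have hadj1' : ¬ (a.val < p.1.val ∧ p.1.val < b.val) := hadj1
          have hadj2' : ¬ (a.val < p.2.val ∧ p.2.val < b.val) := hadj2
          simp only [BtwF, Fin.lt_def]
          constructor
          · rintro (⟨e1, e2⟩ | ⟨e1, e2⟩)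
            · by_cases hb2 : b.val < p.2.val
              · left; omega
              · exact absurd ⟨by omega, by omega⟩ hadj2'
            · by_cases hb2 : b.val < p.1.val
              · right; omega
              · exact absurd ⟨by omega, by omega⟩ hadj1'
          · rintro (⟨e1, e2⟩ | ⟨e1, e2⟩)
            · by_cases ha1 : p.1.val < a.val
              · left; omega
              · exact absurd ⟨by omega, by omega⟩ hadj1'
            · by_cases ha1 : p.2.val < a.val
              · right; omega
              · exact absurd ⟨by omega, by omega⟩ hadj2'
        rcases hcases with ⟨rfl, rfl⟩ | ⟨rfl, rfl⟩
        · exact key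
        · exact key.symm
      · exact hM4 p hp' q hq'

/-- Value of a letter for the `α`-exponent count. -/
def letterVal : Letter → ℤ
  | (false, true) => 1
  | (false, false) => -1
  | (true, _) => 0

theorem mat_mk (g : F) : mat (QuotientGroup.mk g)
    = ((Ψ g : (Matrix (Fin 3) (Fin 3) ℤ)ˣ) : Matrix (Fin 3) (Fin 3) ℤ) := by
  simp [mat, ψH]; rfl

theorem aF_eq (g : F) :
    aF g = ((Ψ g : (Matrix (Fin 3) (Fin 3) ℤ)ˣ) : Matrix (Fin 3) (Fin 3) ℤ) 0 1 := by
  rw [aF, aH, mat_mk]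

theorem Munit_entry (a b c : ℤ) :
    ((Munit a b c : (Matrix (Fin 3) (Fin 3) ℤ)ˣ) : Matrix (Fin 3) (Fin 3) ℤ) 0 1 = a := by
  simp [Munit, Mmat]

theorem aF_mul (g h : F) : aF (g * h) = aF g + aF h := by
  obtain ⟨a, b, c, h1⟩ := Ψ_mem g
  obtain ⟨a', b', c', h2⟩ := Ψ_mem h
  rw [aF_eq, aF_eq, aF_eq, map_mul, h1, h2, Munit_mul, Munit_entry, Munit_entry, Munit_entry]

theorem Ψ_of (b : Bool) : Ψ (FreeGroup.of b) = if b then Munit 0 1 0 else Munit 1 0 0 :=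
  FreeGroup.lift_apply_of

theorem aF_single (x : Letter) : aF (FreeGroup.mk [x]) = letterVal x := by
  obtain ⟨b, s⟩ := x
  cases s
  · have h : FreeGroup.mk [(b, false)] = (FreeGroup.of b)⁻¹ := by
      rw [show FreeGroup.of b = FreeGroup.mk [(b, true)] from rfl, FreeGroup.inv_mk]
      simp [FreeGroup.invRev]
    rw [h, aF_eq, map_inv, Ψ_of]
    cases b <;> simp only [if_true, if_false, Bool.false_eq_true, Munit_inv] <;>
      rw [Munit_entry] <;> rfl
  · rw [show FreeGroup.mk [(b, true)] = FreeGroup.of b from rfl, aF_eq, Ψ_of]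
    cases b <;> simp only [if_true, if_false, Bool.false_eq_true] <;> rw [Munit_entry] <;> rfl

theorem aF_mk_sum (w : Word) : aF (FreeGroup.mk w) = (w.map letterVal).sum := by
  induction w with
  | nil =>
    have h1 : FreeGroup.mk ([] : Word) = 1 := FreeGroup.one_eq_mk.symm
    rw [h1, aF_eq, map_one]
    simp [Matrix.one_apply]
  | cons x l ih =>
    rw [show FreeGroup.mk (x :: l) = FreeGroup.mk [x] * FreeGroup.mk l from by
      rw [FreeGroup.mul_mk]; rfl, aF_mul, aF_single, ih, List.map_cons, List.sum_cons]

theorem list_sum_eq (f : Letter → ℤ) (w : Word) :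
    (w.map f).sum = ∑ i : Fin w.length, f (w.get i) := by
  induction w with
  | nil => simp
  | cons x l ih =>
    rw [List.map_cons, List.sum_cons, ih]
    exact (Fin.sum_univ_succ (fun i : Fin (l.length + 1) => f ((x :: l).get i))).symm

theorem letterVal_eq (y : Letter) :
    letterVal y = (if y = lα then 1 else 0) - (if y = lαinv then 1 else 0) := by
  obtain ⟨b, s⟩ := y
  cases b <;> cases s <;> simp [letterVal, lα, lαinv]

theorem aF_card (w : Word) :
    aF (FreeGroup.mk w) =
      ((Finset.univ.filter fun i : Fin w.length => w.get i = lα).card : ℤ) -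
        ((Finset.univ.filter fun i : Fin w.length => w.get i = lαinv).card : ℤ) := by
  rw [aF_mk_sum, list_sum_eq]
  rw [Finset.sum_congr rfl fun i _ => letterVal_eq (w.get i)]
  rw [Finset.sum_sub_distrib, Finset.sum_boole, Finset.sum_boole]

/-- if `g` is a word with `a(g) = 0`, then there exists a complete
`α`-folding of `g`: a folding in which only `α`-pairs occur and every occurrence of the
letter `α` is paired. -/
theorem statement_17 (w : Word) (ha : aF (FreeGroup.mk w) = 0) :
    ∃ 𝓕 : Folding w, 𝓕.IsCompleteAlpha := by
  classical
  set σ : Fin w.length → Prop := fun i => w.get i = lα with hσ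
  set s₀ : Finset (Fin w.length) := Finset.univ.filter (fun i => w.get i = lα ∨ w.get i = lαinv)
    with hs₀
  have hfσ : s₀.filter σ = Finset.univ.filter (fun i : Fin w.length => w.get i = lα) := by
    ext i
    simp only [hs₀, hσ, Finset.mem_filter, Finset.filter_filter, Finset.mem_univ, true_and]
    tauto
  have hlne : lα ≠ lαinv := by decide
  have hfσ' : s₀.filter (fun i => ¬ σ i) =
      Finset.univ.filter (fun i : Fin w.length => w.get i = lαinv) := by
    ext i
    simp only [hs₀, hσ, Finset.mem_filter, Finset.filter_filter, Finset.mem_univ, true_and]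
    constructor
    · rintro ⟨h1 | h1, h2⟩
      · exact absurd h1 h2
      · exact h1
    · intro h1
      exact ⟨Or.inr h1, fun h2 => hlne (h2 ▸ h1 ▸ rfl)⟩
  have hcard : (s₀.filter σ).card = (s₀.filter fun i => ¬ σ i).card := by
    rw [hfσ, hfσ']
    have := aF_card w
    rw [ha] at this
    omega
  obtain ⟨M, hM1, hM2, hM3, hM4⟩ := exists_matching σ s₀ hcard
  have hget1 : ∀ p ∈ M, w.get p.1 = lα := fun p hp => (hM1 p hp).1
  have hget2 : ∀ p ∈ M, w.get p.2 = lαinv := by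
    intro p hp
    obtain ⟨_, h2, _, h4⟩ := hM1 p hp
    rw [hs₀, Finset.mem_filter] at h4
    rcases h4.2 with h | h
    · exact absurd h h2
    · exact h
  refine ⟨⟨M, ?_, ?_, hM3, ?_⟩, ?_, ?_⟩
  · intro p hp
    intro h
    exact (hM1 p hp).2.1 (h ▸ (hM1 p hp).1)
  · intro p hp
    exact Or.inl ⟨hget1 p hp, hget2 p hp⟩
  · intro p hp q hq
    have hC := hM4 p hp q hq
    constructor
    · rintro ⟨h1, h2⟩
      have h3 := hC.mp (Or.inl ⟨h1, h2⟩)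
      rcases h3 with ⟨h3, h4⟩ | ⟨h3, h4⟩
      · exact ⟨h3, h4⟩
      · exact absurd h4 (asymm (lt_trans (lt_trans h1 h2) h3))
    · rintro ⟨h1, h2⟩
      have h3 := hC.mp (Or.inr ⟨h1, h2⟩)
      rcases h3 with ⟨h3, h4⟩ | ⟨h3, h4⟩
      · exact absurd h2 (asymm (lt_trans (lt_trans h3 h4) h1))
      · exact ⟨h3, h4⟩
  · exact hget1
  · intro i hi
    have hi' : i ∈ s₀ := by
      rw [hs₀, Finset.mem_filter]
      exact ⟨Finset.mem_univ i, Or.inl hi⟩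
    obtain ⟨p, hp, hpi⟩ := hM2 i hi'
    rcases hpi with h | h
    · exact ⟨p, hp, h⟩
    · exfalso
      exact (hM1 p hp).2.1 (h ▸ hi)

end
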